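/- arXiv:2005.03883 — 2 statements merged into one kernel-verified Lean document; each statement's English description precedes it below -/
import Mathlib

section
/- For all integers n ≥ 2, p ≥ 1, and α ∈ [0,1], the operator value on monomials admits the representation G_n^α(e_p; z) = ((n-1)!/(n-1+p)!) · [(1-α) Σ_{k=0}^{n-1} p_{n-1,k}(z) F_p(k) + α Σ_{k=0}^{n} p_{n,k}(z) E_p(k)], where E_p(k) = ∏_{j=0}^{p-1}(k+j) and F_p(k) = (1 - k/(n-1)) E_p(k) + (k/(n-1)) E_p(k+1). -/
open scoped BigOperators Nat

noncomputable def qb (α : ℝ) (n k : ℕ) (z : ℂ) : ℂ :=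
  if n = 1 then (if k = 0 then 1 - z else if k = 1 then z else 0)
  else ((n-2).choose k : ℂ) * (1 - (α:ℂ)) * z^k * (1-z)^(n-k-1)
    + (if 2 ≤ k then ((n-2).choose (k-2) : ℂ) * (1 - (α:ℂ)) * z^(k-1) * (1-z)^(n-k) else 0)
    + (n.choose k : ℂ) * (α:ℂ) * z^k * (1-z)^(n-k)

noncomputable def Gop (α : ℝ) (n : ℕ) (f : ℂ → ℂ) (z : ℂ) : ℂ :=
  qb α n 0 z * f 0 + qb α n n z * f 1 +
    ((n:ℂ) - 1) * ∑ k ∈ Finset.Icc 1 (n-1), qb α n k z *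
      ∫ t in (0:ℝ)..1, (((n-2).choose (k-1) : ℂ) * (t:ℂ)^(k-1) * (1-(t:ℂ))^(n-k-1) * f (t:ℂ))

noncomputable def Ep (p k : ℕ) : ℂ := ∏ j ∈ Finset.range p, ((k:ℂ) + j)

noncomputable def Fp (n p k : ℕ) : ℂ :=
  (1 - (k:ℂ) / ((n:ℂ) - 1)) * Ep p k + ((k:ℂ) / ((n:ℂ) - 1)) * Ep p (k+1)

noncomputable def bern (m j : ℕ) (z : ℂ) : ℂ := (m.choose j : ℂ) * z^j * (1-z)^(m-j)

/-! ### Auxiliary lemmas -/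

lemma GB_sum_range_eq_icc (n : ℕ) (hn : 1 ≤ n) (f : ℕ → ℂ) :
    ∑ k ∈ Finset.range n, f k = f 0 + ∑ k ∈ Finset.Icc 1 (n-1), f k := by
  obtain ⟨m, rfl⟩ : ∃ m, n = m+1 := ⟨n-1, by omega⟩
  rw [Finset.sum_range_succ' f m, show Finset.Icc 1 (m+1-1) = Finset.Ico 1 (m+1) by
      ext x; simp only [Finset.mem_Icc, Finset.mem_Ico]; omega,
    Finset.sum_Ico_eq_sum_range]
  simp [add_comm]

lemma GB_icc_shift (n : ℕ) (hn : 2 ≤ n) (h : ℕ → ℂ) :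
    ∑ k ∈ Finset.Icc 1 (n-1), h (k+1) = ∑ j ∈ Finset.Icc 2 n, h j := by
  have : Finset.Icc 2 n = Finset.map (addRightEmbedding 1) (Finset.Icc 1 (n-1)) := by
    rw [Finset.map_add_right_Icc]; congr 1; omega
  rw [this, Finset.sum_map]
  rfl

lemma GB_icc_top_split (n : ℕ) (hn : 2 ≤ n) (h : ℕ → ℂ) :
    ∑ j ∈ Finset.Icc 2 n, h j = (∑ j ∈ Finset.Icc 2 (n-1), h j) + h n := by
  have h1 : n = (n-1)+1 := by omega
  rw [h1, Finset.sum_Icc_succ_top (by omega)]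
  rw [← h1]

lemma GB_icc_filter (n : ℕ) (hn : 2 ≤ n) (h : ℕ → ℂ) :
    ∑ j ∈ Finset.Icc 1 (n-1), (if 2 ≤ j then h j else 0) = ∑ j ∈ Finset.Icc 2 (n-1), h j := by
  rw [← Finset.sum_filter]
  congr 1
  ext j
  simp only [Finset.mem_filter, Finset.mem_Icc]
  omega

lemma GB_Ep_eq (p k : ℕ) : Ep p k = (k.ascFactorial p : ℂ) := by
  induction p with
  | zero => simp [Ep, Nat.ascFactorial]
  | succ m ih =>
      rw [Ep, Finset.prod_range_succ, ← Ep, ih,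
        show k.ascFactorial (m+1) = (k+m) * k.ascFactorial m from Nat.ascFactorial_succ,
        Nat.cast_mul, Nat.cast_add]
      ring

lemma GB_Ep_zero {p : ℕ} (hp : 1 ≤ p) : Ep p 0 = 0 := by
  apply Finset.prod_eq_zero (Finset.mem_range.mpr hp)
  simp

lemma GB_key_nat (n p k : ℕ) (hn : 2 ≤ n) (hk1 : 1 ≤ k) (hk2 : k ≤ n-1) :
    (n-1) * ((n-2).choose (k-1) * ((k-1+p)! * (n-k-1)!)) = (n-1)! * k.ascFactorial p := by
  apply Nat.eq_of_mul_eq_mul_left (Nat.factorial_pos (k-1))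
  have hc : (n-2).choose (k-1) * (k-1)! * (n-k-1)! = (n-2)! := by
    have h := Nat.choose_mul_factorial_mul_factorial (n := n-2) (k := k-1) (by omega)
    rwa [show n-2-(k-1) = n-k-1 by omega] at h
  have hasc : (k-1)! * k.ascFactorial p = (k-1+p)! := by
    have := Nat.factorial_mul_ascFactorial (k-1) p
    rwa [show k-1+1 = k by omega] at this
  have hnf : (n-1) * (n-2)! = (n-1)! := by
    have := Nat.mul_factorial_pred (n := n-1) (by omega)
    rwa [show n-1-1 = n-2 by omega] at this
  calc (k-1)! * ((n-1) * ((n-2).choose (k-1) * ((k-1+p)! * (n-k-1)!)))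
      = (n-1) * ((n-2).choose (k-1) * (k-1)! * (n-k-1)!) * (k-1+p)! := by ring
    _ = (n-1) * (n-2)! * (k-1+p)! := by rw [hc]
    _ = (n-1)! * ((k-1)! * k.ascFactorial p) := by rw [hnf, hasc]
    _ = (k-1)! * ((n-1)! * k.ascFactorial p) := by ring

lemma GB_choose_id1 (n k : ℕ) (hn : 2 ≤ n) (hk : k ≤ n-1) :
    (n-1).choose k * (n-1-k) = (n-2).choose k * (n-1) := by
  rcases Nat.lt_or_ge k (n-1) with h | h
  · have h1 := Nat.add_one_mul_choose_eq (n-2) (n-1-k-1)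
    rw [show n-2+1 = n-1 by omega, show n-1-k-1+1 = n-1-k by omega] at h1
    calc (n-1).choose k * (n-1-k) = (n-1).choose (n-1-k) * (n-1-k) := by
            rw [Nat.choose_symm (by omega)]
      _ = (n-1) * (n-2).choose (n-1-k-1) := h1.symm
      _ = (n-2).choose k * (n-1) := by
            rw [show n-1-k-1 = n-2-k by omega, Nat.choose_symm (by omega)]; ring
  · have hk' : k = n-1 := le_antisymm hk h
    subst hk'
    rw [Nat.sub_self, Nat.mul_zero, Nat.choose_eq_zero_of_lt (by omega), Nat.zero_mul]

lemma GB_choose_id2 (n k : ℕ) (hn : 2 ≤ n) (hk : 1 ≤ k) :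
    (n-1) * (n-2).choose (k-1) = (n-1).choose k * k := by
  have h := Nat.add_one_mul_choose_eq (n-2) (k-1)
  rw [show n-2+1 = n-1 by omega, show k-1+1 = k by omega] at h
  exact h

lemma GB_beta_nat (a b : ℕ) :
    (∫ t in (0:ℝ)..1, (t:ℂ)^a * (1-(t:ℂ))^b) = (a ! : ℂ) * (b ! : ℂ) / ((a+b+1)! : ℂ) := by
  have hprod : ∀ m : ℕ, (∏ j ∈ Finset.range (m+1), ((a:ℂ)+1+j))
      = ((a+1).ascFactorial (m+1) : ℂ) := by
    intro m
    induction m with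
    | zero => simp [Nat.ascFactorial]
    | succ m ih =>
        rw [Finset.prod_range_succ, ih,
          show (a+1).ascFactorial (m+1+1) = (a+1+(m+1)) * (a+1).ascFactorial (m+1) from
            Nat.ascFactorial_succ,
          Nat.cast_mul, show ((a+1+(m+1) : ℕ) : ℂ) = (a:ℂ)+1+((m+1:ℕ):ℂ) by push_cast; ring]
        ring
  have h1 : (∫ t in (0:ℝ)..1, (t:ℂ)^a * (1-(t:ℂ))^b)
      = Complex.betaIntegral (a+1) (b+1) := by
    rw [Complex.betaIntegral]
    apply intervalIntegral.integral_congr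
    intro x _
    simp only [add_sub_cancel_right]
    rw [Complex.cpow_natCast, Complex.cpow_natCast]
  have h2 := Complex.betaIntegral_eval_nat_add_one_right (u := (a:ℂ)+1) (by
    simp [Complex.add_re]; positivity) b
  have hfac : a ! * (a+1).ascFactorial (b+1) = (a+b+1)! := by
    have := Nat.factorial_mul_ascFactorial a (b+1)
    rwa [← Nat.add_assoc] at this
  rw [h1, h2, hprod]
  have h0 : ((a+1).ascFactorial (b+1) : ℂ) ≠ 0 := by
    have : 0 < (a+1).ascFactorial (b+1) := Nat.ascFactorial_pos _ _
    exact_mod_cast this.ne'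
  rw [div_eq_div_iff h0 (by exact_mod_cast (a+b+1).factorial_ne_zero),
    show ((a+b+1)! : ℂ) = ((a ! * (a+1).ascFactorial (b+1) : ℕ) : ℂ) by rw [hfac]]
  push_cast; ring

lemma GB_int_term (n p k : ℕ) (hn : 2 ≤ n) (hk1 : 1 ≤ k) (hk2 : k ≤ n-1) :
    ((n:ℂ)-1) * ∫ t in (0:ℝ)..1,
        (((n-2).choose (k-1) : ℂ) * (t:ℂ)^(k-1) * (1-(t:ℂ))^(n-k-1) * (t:ℂ)^p)
      = ((n-1)! : ℂ) / ((n-1+p)! : ℂ) * Ep p k := by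
  have hint : (∫ t in (0:ℝ)..1,
        (((n-2).choose (k-1) : ℂ) * (t:ℂ)^(k-1) * (1-(t:ℂ))^(n-k-1) * (t:ℂ)^p))
      = ((n-2).choose (k-1) : ℂ) * ∫ t in (0:ℝ)..1, ((t:ℂ)^(k-1+p) * (1-(t:ℂ))^(n-k-1)) := by
    rw [← intervalIntegral.integral_const_mul]
    apply intervalIntegral.integral_congr
    intro x _
    simp only [pow_add]; ring
  rw [hint, GB_beta_nat, show k-1+p+(n-k-1)+1 = n-1+p by omega, GB_Ep_eq]
  have h2 : ((n:ℂ)-1) = ((n-1 : ℕ) : ℂ) := by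
    rw [Nat.cast_sub (by omega)]; norm_num
  rw [h2, show ((n-1:ℕ):ℂ) * (((n-2).choose (k-1) : ℂ) *
      (((k-1+p)! : ℂ) * ((n-k-1)! : ℂ) / ((n-1+p)! : ℂ)))
    = (((n-1) * ((n-2).choose (k-1) * ((k-1+p)! * (n-k-1)!)) : ℕ) : ℂ) / ((n-1+p)! : ℂ)
      by push_cast; ring, GB_key_nat n p k hn hk1 hk2]
  push_cast; ring

lemma GB_qb_n {α : ℝ} {n : ℕ} (hn : 2 ≤ n) (z : ℂ) :
    qb α n n z = (1 - (α:ℂ)) * z^(n-1) + (α:ℂ) * z^n := by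
  rw [qb, if_neg (by omega)]
  rw [Nat.choose_eq_zero_of_lt (by omega), if_pos hn, Nat.choose_self, Nat.choose_self]
  norm_num

lemma GB_bern_Fp (n p k : ℕ) (hn : 2 ≤ n) (hk : k < n) (z : ℂ) :
    bern (n-1) k z * Fp n p k
      = ((n-2).choose k : ℂ) * z^k * (1-z)^(n-k-1) * Ep p k
        + (((n-1).choose k : ℂ) * ((k:ℂ)/((n:ℂ)-1)) * z^k * (1-z)^(n-1-k)) * Ep p (k+1) := by
  have hne : ((n:ℂ)-1) ≠ 0 := by
    intro h
    have : (n:ℂ) = 1 := by linear_combination h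
    have : n = 1 := by exact_mod_cast this
    omega
  have hA : ((n-1).choose k : ℂ) * (1 - (k:ℂ)/((n:ℂ)-1)) = ((n-2).choose k : ℂ) := by
    have hcast : ((n:ℂ)-1) - (k:ℂ) = ((n-1-k : ℕ) : ℂ) := by
      rw [Nat.cast_sub (by omega), Nat.cast_sub (by omega)]; norm_num
    have h1 : (((n-1).choose k : ℂ)) * (((n:ℂ)-1) - (k:ℂ))
        = ((n-2).choose k : ℂ) * ((n:ℂ)-1) := by
      rw [hcast, show ((n:ℂ)-1) = ((n-1:ℕ):ℂ) by rw [Nat.cast_sub (by omega)]; norm_num]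
      exact_mod_cast congrArg (Nat.cast : ℕ → ℂ) (GB_choose_id1 n k hn (by omega))
    field_simp
    linear_combination h1
  rw [bern, Fp, show n-1-k = n-k-1 by omega]
  rw [mul_add]
  congr 1
  · calc ((n-1).choose k : ℂ) * z^k * (1-z)^(n-k-1) * ((1 - (k:ℂ)/((n:ℂ)-1)) * Ep p k)
      = (((n-1).choose k : ℂ) * (1 - (k:ℂ)/((n:ℂ)-1))) * z^k * (1-z)^(n-k-1) * Ep p k := by ring
      _ = ((n-2).choose k : ℂ) * z^k * (1-z)^(n-k-1) * Ep p k := by rw [hA]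
  · ring

lemma GB_qb_expand (α : ℝ) (n k : ℕ) (hn : 2 ≤ n) (z : ℂ) (p : ℕ) :
    qb α n k z * Ep p k
      = (1-(α:ℂ)) * (((n-2).choose k : ℂ) * z^k * (1-z)^(n-k-1) * Ep p k)
        + (1-(α:ℂ)) *
            (if 2 ≤ k then ((n-2).choose (k-2) : ℂ) * z^(k-1) * (1-z)^(n-k) * Ep p k else 0)
        + (α:ℂ) * (bern n k z * Ep p k) := by
  rw [qb, if_neg (by omega), bern]
  split_ifs <;> ring

theorem Gop_monomial_repr (n p : ℕ) (hn : 2 ≤ n) (hp : 1 ≤ p)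
    (α : ℝ) (hα : α ∈ Set.Icc (0:ℝ) 1) (z : ℂ) :
    Gop α n (fun w => w^p) z
      = ((n-1)! : ℂ) / ((n-1+p)! : ℂ) *
          ((1-(α:ℂ)) * ∑ k ∈ Finset.range n, bern (n-1) k z * Fp n p k
            + (α:ℂ) * ∑ k ∈ Finset.range (n+1), bern n k z * Ep p k) := by
  have hne : ((n:ℂ)-1) ≠ 0 := by
    intro h
    have : (n:ℂ) = 1 := by linear_combination h
    have : n = 1 := by exact_mod_cast this
    omega
  set Cc : ℂ := ((n-1)! : ℂ) / ((n-1+p)! : ℂ) with hCc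
  -- the constant times Ep p n is 1
  have hCn : Cc * Ep p n = 1 := by
    rw [hCc, GB_Ep_eq]
    have hfac : (n-1)! * n.ascFactorial p = (n-1+p)! := by
      have := Nat.factorial_mul_ascFactorial (n-1) p
      rwa [show n-1+1 = n by omega] at this
    rw [div_mul_eq_mul_div, show ((n-1)! : ℂ) * (n.ascFactorial p : ℂ)
        = (((n-1)! * n.ascFactorial p : ℕ) : ℂ) by push_cast; ring, hfac,
      div_self (by exact_mod_cast (n-1+p).factorial_ne_zero)]
  -- abbreviations
  set A : ℕ → ℂ := fun k => ((n-2).choose k : ℂ) * z^k * (1-z)^(n-k-1) * Ep p k with hA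
  set B : ℕ → ℂ := fun k =>
    (((n-1).choose k : ℂ) * ((k:ℂ)/((n:ℂ)-1)) * z^k * (1-z)^(n-1-k)) * Ep p (k+1) with hB
  set H : ℕ → ℂ := fun j =>
    ((n-2).choose (j-2) : ℂ) * z^(j-1) * (1-z)^(n-j) * Ep p j with hH
  -- S1 decomposition
  have hS1 : ∑ k ∈ Finset.range n, bern (n-1) k z * Fp n p k
      = (∑ k ∈ Finset.Icc 1 (n-1), A k)
        + ((∑ k ∈ Finset.Icc 1 (n-1), (if 2 ≤ k then H k else 0)) + z^(n-1) * Ep p n) := by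
    have e1 : ∑ k ∈ Finset.range n, bern (n-1) k z * Fp n p k
        = ∑ k ∈ Finset.range n, (A k + B k) := by
      apply Finset.sum_congr rfl
      intro k hk
      exact GB_bern_Fp n p k hn (Finset.mem_range.mp hk) z
    rw [e1, Finset.sum_add_distrib]
    congr 1
    · -- A sum
      rw [GB_sum_range_eq_icc n (by omega) A, hA]
      simp [GB_Ep_zero hp]
    · -- B sum
      have hB0 : B 0 = 0 := by simp [hB]
      have hBH : ∀ k ∈ Finset.Icc 1 (n-1), B k = H (k+1) := by
        intro k hk
        rw [Finset.mem_Icc] at hk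
        have hcoef : ((n-1).choose k : ℂ) * ((k:ℂ)/((n:ℂ)-1)) = ((n-2).choose (k-1) : ℂ) := by
          have h1 : ((n:ℂ)-1) * ((n-2).choose (k-1) : ℂ) = ((n-1).choose k : ℂ) * (k:ℂ) := by
            rw [show ((n:ℂ)-1) = ((n-1:ℕ):ℂ) by rw [Nat.cast_sub (by omega)]; norm_num]
            exact_mod_cast congrArg (Nat.cast : ℕ → ℂ) (GB_choose_id2 n k hn hk.1)
          field_simp
          linear_combination -h1
        rw [hB, hH]
        simp only
        rw [show k+1-2 = k-1 by omega, show k+1-1 = k by omega,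
          show n-(k+1) = n-1-k by omega, ← hcoef]
      rw [GB_sum_range_eq_icc n (by omega) B, hB0, zero_add,
        Finset.sum_congr rfl hBH, GB_icc_shift n hn H, GB_icc_top_split n hn H,
        GB_icc_filter n hn H]
      congr 1
      rw [hH]
      simp only
      rw [Nat.sub_self, Nat.choose_self, pow_zero]
      push_cast; ring
  -- S2 decomposition
  have hS2 : ∑ k ∈ Finset.range (n+1), bern n k z * Ep p k
      = (∑ k ∈ Finset.Icc 1 (n-1), bern n k z * Ep p k) + z^n * Ep p n := by
    rw [Finset.sum_range_succ,
      GB_sum_range_eq_icc n (by omega) (fun k => bern n k z * Ep p k)]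
    rw [GB_Ep_zero hp, mul_zero, zero_add, bern, Nat.choose_self, Nat.sub_self, pow_zero]
    push_cast; ring
  -- LHS
  simp only [Gop]
  rw [zero_pow (by omega), one_pow, mul_zero, zero_add, mul_one, GB_qb_n hn z]
  have hsum : ((n:ℂ) - 1) * ∑ k ∈ Finset.Icc 1 (n-1), qb α n k z *
      ∫ t in (0:ℝ)..1, (((n-2).choose (k-1) : ℂ) * (t:ℂ)^(k-1) * (1-(t:ℂ))^(n-k-1) * (t:ℂ)^p)
      = Cc * ∑ k ∈ Finset.Icc 1 (n-1), qb α n k z * Ep p k := by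
    rw [Finset.mul_sum, Finset.mul_sum]
    apply Finset.sum_congr rfl
    intro k hk
    rw [Finset.mem_Icc] at hk
    calc ((n:ℂ)-1) * (qb α n k z * ∫ t in (0:ℝ)..1,
            (((n-2).choose (k-1) : ℂ) * (t:ℂ)^(k-1) * (1-(t:ℂ))^(n-k-1) * (t:ℂ)^p))
        = qb α n k z * (((n:ℂ)-1) * ∫ t in (0:ℝ)..1,
            (((n-2).choose (k-1) : ℂ) * (t:ℂ)^(k-1) * (1-(t:ℂ))^(n-k-1) * (t:ℂ)^p)) := by ring
      _ = qb α n k z * (Cc * Ep p k) := by rw [GB_int_term n p k hn hk.1 hk.2]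
      _ = Cc * (qb α n k z * Ep p k) := by ring
  rw [hsum, hS1, hS2]
  have hqb : ∑ k ∈ Finset.Icc 1 (n-1), qb α n k z * Ep p k
      = (1-(α:ℂ)) * (∑ k ∈ Finset.Icc 1 (n-1), A k)
        + (1-(α:ℂ)) * (∑ k ∈ Finset.Icc 1 (n-1), (if 2 ≤ k then H k else 0))
        + (α:ℂ) * (∑ k ∈ Finset.Icc 1 (n-1), bern n k z * Ep p k) := by
    rw [Finset.mul_sum, Finset.mul_sum, Finset.mul_sum, ← Finset.sum_add_distrib,
      ← Finset.sum_add_distrib]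
    apply Finset.sum_congr rfl
    intro k _
    have := GB_qb_expand α n k hn z p
    rw [this, hA, hH]
  rw [hqb]
  linear_combination -(((1:ℂ)-(α:ℂ)) * z^(n-1) + (α:ℂ) * z^n) * hCn
end

section
/- For all integers p ≥ 0, n ≥ 2, α ∈ [0,1], r ≥ 1 and all complex z with |z| ≤ r, we have |G_n^α(e_p; z)| ≤ r^p. -/
open scoped BigOperators Nat
open Finset

/-! ### Auxiliary lemmas -/

lemma beta_nat (a b : ℕ) :
    ∫ t in (0:ℝ)..1, (t:ℂ)^a * (1-(t:ℂ))^b = ((a ! : ℂ) * (b ! : ℂ)) / ((a+b+1)! : ℂ) := by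
  have h1 : ∫ t in (0:ℝ)..1, (t:ℂ)^a * (1-(t:ℂ))^b
      = Complex.betaIntegral (a+1) (b+1) := by
    rw [Complex.betaIntegral]
    refine intervalIntegral.integral_congr fun x _ => ?_
    have ha : ((a:ℂ)+1) - 1 = (a:ℂ) := by ring
    have hb : ((b:ℂ)+1) - 1 = (b:ℂ) := by ring
    rw [ha, hb, Complex.cpow_natCast, Complex.cpow_natCast]
  have ha : (0:ℝ) < ((a:ℂ)+1).re := by simp; positivity
  have hb : (0:ℝ) < ((b:ℂ)+1).re := by simp; positivity
  have h2 := Complex.Gamma_mul_Gamma_eq_betaIntegral ha hb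
  rw [Complex.Gamma_nat_eq_factorial, Complex.Gamma_nat_eq_factorial] at h2
  have h3 : ((a:ℂ)+1) + ((b:ℂ)+1) = ((a+b+1 : ℕ) : ℂ) + 1 := by push_cast; ring
  rw [h3, Complex.Gamma_nat_eq_factorial] at h2
  have h4 : ((a+b+1)! : ℂ) ≠ 0 := by exact_mod_cast (a+b+1).factorial_ne_zero
  rw [h1, eq_div_iff h4, mul_comm (Complex.betaIntegral _ _), ← h2]

lemma choose_desc (m s j : ℕ) (h : s + j ≤ m) :
    m.choose (s+j) * (s+j).descFactorial s = m.descFactorial s * (m-s).choose j := by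
  rw [Nat.descFactorial_eq_factorial_mul_choose, Nat.descFactorial_eq_factorial_mul_choose]
  have key : m.choose (s+j) * (s+j).choose s = m.choose s * (m-s).choose j := by
    have h2 := Nat.choose_mul (n := m) (k := s+j) (s := s) (by omega)
    simpa using h2
  calc m.choose (s+j) * (s ! * (s+j).choose s)
      = (m.choose (s+j) * (s+j).choose s) * s ! := by ring
    _ = (m.choose s * (m-s).choose j) * s ! := by rw [key]
    _ = s ! * m.choose s * (m-s).choose j := by ring

lemma moment (m s : ℕ) (z : ℂ) :
    ∑ k ∈ range (m+1), (m.choose k : ℂ) * (k.descFactorial s : ℂ) * z^k * (1-z)^(m-k)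
      = (m.descFactorial s : ℂ) * z^s := by
  by_cases hs : s ≤ m
  · have split : ∑ k ∈ range (m+1), (m.choose k : ℂ) * (k.descFactorial s : ℂ) * z^k * (1-z)^(m-k)
        = ∑ k ∈ Ico s (m+1), (m.choose k : ℂ) * (k.descFactorial s : ℂ) * z^k * (1-z)^(m-k) := by
      rw [range_eq_Ico, ← Finset.sum_Ico_consecutive _ (Nat.zero_le s) (by omega)]
      have hz : ∑ k ∈ Ico 0 s, (m.choose k : ℂ) * (k.descFactorial s : ℂ) * z^k * (1-z)^(m-k) = 0 := by
        apply Finset.sum_eq_zero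
        intro k hk
        simp only [mem_Ico] at hk
        rw [Nat.descFactorial_eq_zero_iff_lt.2 hk.2]
        simp
      rw [hz, zero_add]
    rw [split, Finset.sum_Ico_eq_sum_range]
    have hcast : ∀ j ∈ range (m+1-s),
        (m.choose (s+j) : ℂ) * ((s+j).descFactorial s : ℂ) * z^(s+j) * (1-z)^(m-(s+j))
        = (m.descFactorial s : ℂ) * z^s * (z^j * (1-z)^((m-s)-j) * ((m-s).choose j : ℂ)) := by
      intro j hj
      simp only [mem_range] at hj
      have h1 : (m.choose (s+j) : ℂ) * ((s+j).descFactorial s : ℂ)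
          = (m.descFactorial s : ℂ) * ((m-s).choose j : ℂ) := by
        exact_mod_cast congrArg (Nat.cast (R := ℂ)) (choose_desc m s j (by omega))
      have h2 : m - (s+j) = (m-s) - j := by omega
      rw [h2, pow_add]
      calc (m.choose (s+j) : ℂ) * ((s+j).descFactorial s : ℂ) * (z^s * z^j) * (1-z)^((m-s)-j)
          = ((m.choose (s+j) : ℂ) * ((s+j).descFactorial s : ℂ)) * (z^s * z^j) * (1-z)^((m-s)-j) := by ring
        _ = ((m.descFactorial s : ℂ) * ((m-s).choose j : ℂ)) * (z^s * z^j) * (1-z)^((m-s)-j) := by rw [h1]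
        _ = (m.descFactorial s : ℂ) * z^s * (z^j * (1-z)^((m-s)-j) * ((m-s).choose j : ℂ)) := by ring
    rw [Finset.sum_congr rfl hcast, ← Finset.mul_sum]
    have hms : m + 1 - s = (m - s) + 1 := by omega
    rw [hms]
    have hbin : ∑ j ∈ range ((m-s)+1), z^j * (1-z)^((m-s)-j) * ((m-s).choose j : ℂ)
        = (z + (1-z))^(m-s) := (add_pow z (1-z) (m-s)).symm
    rw [hbin]
    simp
  · rw [Nat.descFactorial_eq_zero_iff_lt.2 (by omega)]
    simp only [Nat.cast_zero, zero_mul]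
    apply Finset.sum_eq_zero
    intro k hk
    simp only [mem_range] at hk
    rw [Nat.descFactorial_eq_zero_iff_lt.2 (by omega)]
    simp

lemma k_mul_desc (k s : ℕ) :
    (k:ℝ) * (k.descFactorial s : ℝ) = (k.descFactorial (s+1) : ℝ) + s * (k.descFactorial s : ℝ) := by
  by_cases h : s ≤ k
  · rw [Nat.descFactorial_succ, Nat.cast_mul, Nat.cast_sub h]
    ring
  · rw [Nat.descFactorial_eq_zero_iff_lt.2 (by omega),
      Nat.descFactorial_eq_zero_iff_lt.2 (by omega)]
    simp

lemma asc_expand (p : ℕ) : ∃ d : ℕ → ℝ, (∀ s, 0 ≤ d s) ∧ (∀ s, p < s → d s = 0) ∧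
    ∀ k : ℕ, (k.ascFactorial p : ℝ) = ∑ s ∈ range (p+1), d s * (k.descFactorial s : ℝ) := by
  induction p with
  | zero =>
    refine ⟨fun s => if s = 0 then 1 else 0, fun s => by positivity, fun s hs => by simp; omega, fun k => by simp⟩
  | succ p ih =>
    obtain ⟨d, hd0, hdz, hd⟩ := ih
    refine ⟨fun s => (if s = 0 then 0 else d (s-1)) + ((s:ℝ) + p) * d s, ?_, ?_, ?_⟩
    · intro s
      dsimp only
      have h1 : 0 ≤ ((s:ℝ) + p) * d s := mul_nonneg (by positivity) (hd0 s)
      have h2 := hd0 (s-1)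
      split <;> linarith
    · intro s hs
      dsimp only
      rw [hdz s (by omega), if_neg (by omega), hdz (s-1) (by omega)]
      ring
    · intro k
      have step : (k.ascFactorial (p+1) : ℝ) = ((k:ℝ) + p) * (k.ascFactorial p : ℝ) := by
        rw [Nat.ascFactorial_succ]; push_cast; ring
      rw [step, hd, Finset.mul_sum]
      have per : ∀ s ∈ range (p+1), ((k:ℝ) + p) * (d s * (k.descFactorial s : ℝ))
          = d s * (k.descFactorial (s+1) : ℝ) + ((s:ℝ) + p) * d s * (k.descFactorial s : ℝ) := by
        intro s _
        linear_combination (d s) * (k_mul_desc k s)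
      rw [Finset.sum_congr rfl per, Finset.sum_add_distrib]
      have expand : ∀ s ∈ range (p+1+1),
          ((if s = 0 then 0 else d (s-1)) + ((s:ℝ) + p) * d s) * (k.descFactorial s : ℝ)
          = (if s = 0 then 0 else d (s-1)) * (k.descFactorial s : ℝ)
            + ((s:ℝ) + p) * d s * (k.descFactorial s : ℝ) := fun s _ => by ring
      rw [Finset.sum_congr rfl expand, Finset.sum_add_distrib]
      congr 1
      · rw [Finset.sum_range_succ' (fun s => (if s = 0 then 0 else d (s-1)) * (k.descFactorial s : ℝ)) (p+1)]
        simp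
      · rw [Finset.sum_range_succ (fun s => ((s:ℝ) + p) * d s * (k.descFactorial s : ℝ)) (p+1),
          hdz (p+1) (by omega)]
        simp

noncomputable def Sb (p m : ℕ) (z : ℂ) : ℂ :=
  ∑ k ∈ range (m+1), (m.choose k : ℂ) * (k.ascFactorial p : ℂ) * z^k * (1-z)^(m-k)

lemma Sb_bound (p m : ℕ) (r : ℝ) (hr : 1 ≤ r) (z : ℂ) (hz : ‖z‖ ≤ r) :
    ‖Sb p m z‖ ≤ r^p * (m.ascFactorial p : ℝ) := by
  obtain ⟨d, hd0, hdz, hd⟩ := asc_expand p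
  have hdC : ∀ k : ℕ, (k.ascFactorial p : ℂ) = ∑ s ∈ range (p+1), (d s : ℂ) * (k.descFactorial s : ℂ) := by
    intro k
    exact_mod_cast congrArg (Complex.ofReal) (hd k)
  have repr : Sb p m z = ∑ s ∈ range (p+1), (d s : ℂ) * ((m.descFactorial s : ℂ) * z^s) := by
    rw [Sb]
    have hterm : ∀ k ∈ range (m+1), (m.choose k : ℂ) * (k.ascFactorial p : ℂ) * z^k * (1-z)^(m-k)
        = ∑ s ∈ range (p+1), (d s : ℂ) * ((m.choose k : ℂ) * (k.descFactorial s : ℂ) * z^k * (1-z)^(m-k)) := by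
      intro k _
      rw [hdC, Finset.mul_sum, Finset.sum_mul, Finset.sum_mul]
      exact Finset.sum_congr rfl fun s _ => by ring
    rw [Finset.sum_congr rfl hterm, Finset.sum_comm]
    exact Finset.sum_congr rfl fun s _ => by rw [← Finset.mul_sum, moment]
  calc ‖Sb p m z‖ ≤ ∑ s ∈ range (p+1), ‖(d s : ℂ) * ((m.descFactorial s : ℂ) * z^s)‖ := by
        rw [repr]; exact norm_sum_le _ _
    _ ≤ ∑ s ∈ range (p+1), d s * ((m.descFactorial s : ℝ) * r^p) := by
        apply Finset.sum_le_sum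
        intro s hs
        simp only [mem_range] at hs
        rw [norm_mul, norm_mul, norm_pow, Complex.norm_real, Real.norm_eq_abs,
          abs_of_nonneg (hd0 s), Complex.norm_natCast]
        have h2 : ‖z‖^s ≤ r^p := by
          calc ‖z‖^s ≤ r^s := pow_le_pow_left₀ (norm_nonneg z) hz s
            _ ≤ r^p := pow_le_pow_right₀ hr (by omega)
        have h3 : (0:ℝ) ≤ (m.descFactorial s : ℝ) := by positivity
        exact mul_le_mul_of_nonneg_left
          (mul_le_mul_of_nonneg_left h2 h3) (hd0 s)
    _ = r^p * ∑ s ∈ range (p+1), d s * (m.descFactorial s : ℝ) := by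
        rw [Finset.mul_sum]; exact Finset.sum_congr rfl fun s _ => by ring
    _ = r^p * (m.ascFactorial p : ℝ) := by rw [← hd m]

noncomputable def ccf (p M : ℕ) : ℂ := ((M ! : ℕ) : ℂ) / (((M+p)! : ℕ) : ℂ)

lemma ccf_shift (p m : ℕ) :
    ccf p (m+1) * (((m:ℂ)+1)+p) = ccf p m * ((m:ℂ)+1) := by
  rw [ccf, ccf]
  have h1 : (((m+1+p)! : ℕ) : ℂ) ≠ 0 := by exact_mod_cast (m+1+p).factorial_ne_zero
  have h2 : (((m+p)! : ℕ) : ℂ) ≠ 0 := by exact_mod_cast (m+p).factorial_ne_zero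
  field_simp
  have key : ((m+1)! : ℕ) * ((m+1+p) : ℕ) * ((m+p)! : ℕ) = ((m+1) : ℕ) * (m !) * ((m+1+p)! : ℕ) := by
    have e1 : (m+1)! = (m+1) * m ! := Nat.factorial_succ m
    have e2 : (m+1+p)! = (m+1+p) * (m+p)! := by
      have h : m+1+p = (m+p)+1 := by omega
      rw [h, Nat.factorial_succ]
    rw [e1, e2]; ring
  calc ((m+1)! : ℂ) * (((m:ℂ)+1)+p) * (((m+p)! : ℕ) : ℂ)
      = ((((m+1)! * (m+1+p) * (m+p)!) : ℕ) : ℂ) := by push_cast; ring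
    _ = ((((m+1) * m ! * ((m+1+p)!)) : ℕ) : ℂ) := by exact_mod_cast congrArg (Nat.cast (R := ℂ)) key
    _ = ((m ! : ℕ) : ℂ) * ((m:ℂ)+1) * (((m+1+p)! : ℕ) : ℂ) := by push_cast; ring
  ring

lemma per_j (p m j : ℕ) (hj : j ≤ m) :
    (m.choose (j+1) : ℂ) * (ccf p (m+1) * ((j+1).ascFactorial p : ℂ))
      + (m.choose j : ℂ) * (ccf p (m+1) * ((j+2).ascFactorial p : ℂ))
    = ((m+1).choose (j+1) : ℂ) * (ccf p m * ((j+1).ascFactorial p : ℂ)) := by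
  have hm1 : ((m:ℂ)+1) ≠ 0 := by
    have h : ((m:ℂ)+1) = ((m+1 : ℕ) : ℂ) := by push_cast; ring
    rw [h]; exact_mod_cast (Nat.succ_ne_zero m)
  apply mul_left_cancel₀ hm1
  have hb : ((m:ℂ)+1) * (m.choose j : ℂ) = ((m+1).choose (j+1) : ℂ) * ((j:ℂ)+1) := by
    have h := congrArg (Nat.cast (R := ℂ)) (Nat.add_one_mul_choose_eq m j)
    push_cast [Nat.succ_eq_add_one] at h
    convert h using 2
  have ha : ((m:ℂ)+1) * (m.choose (j+1) : ℂ) = ((m+1).choose (j+1) : ℂ) * ((m:ℂ)-j) := by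
    have h := congrArg (Nat.cast (R := ℂ)) (Nat.choose_mul_succ_eq m (j+1))
    push_cast at h
    have hsub : ((m-j : ℕ) : ℂ) = (m:ℂ) - j := Nat.cast_sub hj
    rw [hsub] at h
    linear_combination h
  have hc : ((j:ℂ)+1) * ((j+2).ascFactorial p : ℂ) = (((j:ℂ)+1)+p) * ((j+1).ascFactorial p : ℂ) := by
    have h := congrArg (Nat.cast (R := ℂ)) (Nat.succ_ascFactorial (j+1) p)
    push_cast [Nat.succ_eq_add_one] at h
    convert h using 2
  have hd := ccf_shift p m
  linear_combination (ccf p (m+1) * (((j+1).ascFactorial p : ℕ) : ℂ)) * ha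
    + (ccf p (m+1) * (((j+2).ascFactorial p : ℕ) : ℂ)) * hb
    + (ccf p (m+1) * (((m+1).choose (j+1) : ℕ) : ℂ)) * hc
    + ((((m+1).choose (j+1) : ℕ) : ℂ) * (((j+1).ascFactorial p : ℕ) : ℂ)) * hd
lemma int_eval (p m i : ℕ) (hi : i ≤ m) :
    ((m:ℂ)+1) * ∫ t in (0:ℝ)..1, ((m.choose i : ℂ) * (t:ℂ)^i * (1-(t:ℂ))^(m-i) * (t:ℂ)^p)
      = ccf p (m+1) * ((i+1).ascFactorial p : ℂ) := by
  have hcongr : (∫ t in (0:ℝ)..1, ((m.choose i : ℂ) * (t:ℂ)^i * (1-(t:ℂ))^(m-i) * (t:ℂ)^p))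
      = (m.choose i : ℂ) * ∫ t in (0:ℝ)..1, ((t:ℂ)^(i+p) * (1-(t:ℂ))^(m-i)) := by
    rw [← intervalIntegral.integral_const_mul]
    refine intervalIntegral.integral_congr fun x _ => ?_
    rw [pow_add]
    ring
  rw [hcongr, beta_nat]
  have hexp : i + p + (m-i) + 1 = m + 1 + p := by omega
  rw [hexp, ccf]
  have natid : (m+1) * (m.choose i * ((i+p)! * (m-i)!)) = (m+1)! * ((i+1).ascFactorial p) := by
    rw [← Nat.factorial_mul_ascFactorial i p, Nat.factorial_succ,
      ← Nat.choose_mul_factorial_mul_factorial hi]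
    ring
  have hD : (((m+1+p)! : ℕ) : ℂ) ≠ 0 := by exact_mod_cast (m+1+p).factorial_ne_zero
  calc ((m:ℂ)+1) * ((m.choose i : ℂ) * (((i+p)! : ℂ) * ((m-i)! : ℂ) / (((m+1+p)! : ℕ) : ℂ)))
      = ((((m+1) * (m.choose i * ((i+p)! * (m-i)!)) : ℕ) : ℂ)) / (((m+1+p)! : ℕ) : ℂ) := by
        push_cast; ring
    _ = (((((m+1)! * ((i+1).ascFactorial p)) : ℕ) : ℂ)) / (((m+1+p)! : ℕ) : ℂ) := by rw [natid]
    _ = (((m+1)! : ℕ) : ℂ) / (((m+1+p)! : ℕ) : ℂ) * (((i+1).ascFactorial p : ℕ) : ℂ) := by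
        push_cast; ring

lemma ccf_zero (M : ℕ) : ccf 0 M = 1 := by
  rw [ccf, Nat.add_zero]
  exact div_self (by exact_mod_cast M.factorial_ne_zero)

lemma mu_zero (p m : ℕ) : ccf p (m+1) * ((Nat.ascFactorial 0 p : ℕ) : ℂ) = (0:ℂ)^p := by
  cases p with
  | zero => simp [ccf_zero]
  | succ q =>
    rw [Nat.zero_ascFactorial]
    simp

lemma mu_eq (p m : ℕ) : ccf p (m+1) * ((Nat.ascFactorial 0 p : ℕ) : ℂ) = ccf p m * ((Nat.ascFactorial 0 p : ℕ) : ℂ) := by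
  cases p with
  | zero => simp [ccf_zero]
  | succ q => rw [Nat.zero_ascFactorial]; simp

lemma mu_top (p m : ℕ) : ccf p (m+1) * (((m+2).ascFactorial p : ℕ) : ℂ) = 1 := by
  rw [ccf]
  have h := Nat.factorial_mul_ascFactorial (m+1) p
  have hD : (((m+1+p)! : ℕ) : ℂ) ≠ 0 := by exact_mod_cast (m+1+p).factorial_ne_zero
  rw [div_mul_eq_mul_div, div_eq_one_iff_eq hD]
  exact_mod_cast congrArg (Nat.cast (R := ℂ)) h
lemma keysum (p m : ℕ) (α : ℝ) (z : ℂ) :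
    ∑ k ∈ range (m+3), qb α (m+2) k z * (ccf p (m+1) * (k.ascFactorial p : ℂ))
      = (1-(α:ℂ)) * ccf p m * Sb p (m+1) z + (α:ℂ) * ccf p (m+1) * Sb p (m+2) z := by
  set μ : ℕ → ℂ := fun k => ccf p (m+1) * (k.ascFactorial p : ℂ) with hμ
  have hqb : ∀ k, qb α (m+2) k z * μ k
      = (m.choose k : ℂ) * (1-(α:ℂ)) * z^k * (1-z)^(m+1-k) * μ k
        + (if 2 ≤ k then (m.choose (k-2) : ℂ) * (1-(α:ℂ)) * z^(k-1) * (1-z)^(m+2-k) * μ k else 0)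
        + ((m+2).choose k : ℂ) * (α:ℂ) * z^k * (1-z)^(m+2-k) * μ k := by
    intro k
    rw [qb, if_neg (by omega)]
    have e1 : m+2-2 = m := by omega
    have e2 : m+2-k-1 = m+1-k := by omega
    rw [e1, e2, add_mul, add_mul, ite_mul, zero_mul]
  rw [Finset.sum_congr rfl (fun k _ => hqb k), Finset.sum_add_distrib, Finset.sum_add_distrib]
  -- third sum
  have h3 : ∑ k ∈ range (m+3), ((m+2).choose k : ℂ) * (α:ℂ) * z^k * (1-z)^(m+2-k) * μ k
      = (α:ℂ) * ccf p (m+1) * Sb p (m+2) z := by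
    rw [Sb, Finset.mul_sum]
    exact Finset.sum_congr rfl fun k _ => by rw [hμ]; ring
  -- second sum
  have h2 : ∑ k ∈ range (m+3), (if 2 ≤ k then (m.choose (k-2) : ℂ) * (1-(α:ℂ)) * z^(k-1) * (1-z)^(m+2-k) * μ k else 0)
      = ∑ i ∈ range (m+1), (m.choose i : ℂ) * (1-(α:ℂ)) * z^(i+1) * (1-z)^(m-i) * μ (i+2) := by
    rw [range_eq_Ico, ← Finset.sum_Ico_consecutive _ (show (0:ℕ) ≤ 2 by omega) (show (2:ℕ) ≤ m+3 by omega)]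
    have hlow : ∑ k ∈ Ico 0 2, (if 2 ≤ k then (m.choose (k-2) : ℂ) * (1-(α:ℂ)) * z^(k-1) * (1-z)^(m+2-k) * μ k else 0) = 0 := by
      apply Finset.sum_eq_zero
      intro k hk
      simp only [mem_Ico] at hk
      rw [if_neg (by omega)]
    rw [hlow, zero_add]
    have hpos : ∀ k ∈ Ico 2 (m+3),
        (if 2 ≤ k then (m.choose (k-2) : ℂ) * (1-(α:ℂ)) * z^(k-1) * (1-z)^(m+2-k) * μ k else 0)
        = (m.choose (k-2) : ℂ) * (1-(α:ℂ)) * z^(k-1) * (1-z)^(m+2-k) * μ k := by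
      intro k hk
      simp only [mem_Ico] at hk
      rw [if_pos hk.1]
    rw [Finset.sum_congr rfl hpos, Finset.sum_Ico_eq_sum_range]
    have : m+3-2 = m+1 := by omega
    rw [this]
    apply Finset.sum_congr rfl
    intro i _
    have e1 : 2+i-2 = i := by omega
    have e2 : 2+i-1 = i+1 := by omega
    have e3 : m+2-(2+i) = m-i := by omega
    have e4 : 2+i = i+2 := by omega
    rw [e1, e2, e3, e4]
  -- first sum
  have h1 : ∑ k ∈ range (m+3), (m.choose k : ℂ) * (1-(α:ℂ)) * z^k * (1-z)^(m+1-k) * μ k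
      = ((m.choose 0 : ℂ) * (1-(α:ℂ)) * z^0 * (1-z)^(m+1-0) * μ 0)
        + ∑ i ∈ range (m+1), (m.choose (i+1) : ℂ) * (1-(α:ℂ)) * z^(i+1) * (1-z)^(m-i) * μ (i+1) := by
    rw [Finset.sum_range_succ]
    have hz : (m.choose (m+2) : ℂ) = 0 := by
      rw [Nat.choose_eq_zero_of_lt (by omega)]; simp
    rw [hz]
    simp only [zero_mul, add_zero]
    rw [Finset.sum_range_succ' (fun k => (m.choose k : ℂ) * (1-(α:ℂ)) * z^k * (1-z)^(m+1-k) * μ k) (m+1)]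
    rw [add_comm]
    congr 1
    apply Finset.sum_congr rfl
    intro i _
    have e : m+1-(i+1) = m-i := by omega
    rw [e]
  rw [h1, h2, h3]
  -- RHS first part
  have hR : (1-(α:ℂ)) * ccf p m * Sb p (m+1) z
      = ((1-(α:ℂ)) * ccf p m * ((Nat.ascFactorial 0 p : ℕ) : ℂ) * (1-z)^(m+1))
        + ∑ i ∈ range (m+1), ((m+1).choose (i+1) : ℂ) * (1-(α:ℂ)) * z^(i+1) * (1-z)^(m-i)
            * (ccf p m * ((i+1).ascFactorial p : ℂ)) := by
    rw [Sb, Finset.mul_sum,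
      Finset.sum_range_succ' (fun k => (1-(α:ℂ)) * ccf p m * (((m+1).choose k : ℂ) * (k.ascFactorial p : ℂ) * z^k * (1-z)^(m+1-k))) (m+1)]
    rw [add_comm]
    congr 1
    · simp only [Nat.choose_zero_right, Nat.cast_one, one_mul, pow_zero, Nat.sub_zero, mul_one]
      ring
    · apply Finset.sum_congr rfl
      intro i _
      have e : m+1-(i+1) = m-i := by omega
      rw [e]
      ring
  rw [hR]
  congr 1
  rw [add_assoc, ← Finset.sum_add_distrib]
  congr 1
  · simp only [hμ]
    rw [mu_eq p m]
    simp only [Nat.choose_zero_right, Nat.cast_one, pow_zero, Nat.sub_zero]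
    ring
  · apply Finset.sum_congr rfl
    intro i hi
    simp only [mem_range] at hi
    simp only [hμ]
    linear_combination ((1-(α:ℂ)) * z^(i+1) * (1-z)^(m-i)) * per_j p m i (by omega)
lemma Gop_eq (p m : ℕ) (α : ℝ) (z : ℂ) :
    Gop α (m+2) (fun w => w^p) z
      = (1-(α:ℂ)) * ccf p m * Sb p (m+1) z + (α:ℂ) * ccf p (m+1) * Sb p (m+2) z := by
  rw [← keysum p m α z, Gop]
  have hsplit : range (m+3) = insert 0 (insert (m+2) (Finset.Icc 1 (m+1))) := by
    ext x; simp; omega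
  have hne1 : (0:ℕ) ∉ insert (m+2) (Finset.Icc 1 (m+1)) := by simp
  have hne2 : (m+2) ∉ Finset.Icc 1 (m+1) := by simp
  rw [hsplit, Finset.sum_insert hne1, Finset.sum_insert hne2]
  have e1 : m+2-1 = m+1 := by omega
  have e2 : m+2-2 = m := by omega
  rw [e1, e2]
  have hn : ((m+2 : ℕ):ℂ) - 1 = (m:ℂ)+1 := by push_cast; ring
  rw [hn]
  have hmu0 : ccf p (m+1) * ((Nat.ascFactorial 0 p : ℕ) : ℂ) = (0:ℂ)^p := mu_zero p m
  have hI : ((m:ℂ)+1) * ∑ k ∈ Finset.Icc 1 (m+1), qb α (m+2) k z *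
        ∫ t in (0:ℝ)..1, ((m.choose (k-1) : ℂ) * (t:ℂ)^(k-1) * (1-(t:ℂ))^(m+2-k-1) * (fun w => w^p) (t:ℂ))
      = ∑ k ∈ Finset.Icc 1 (m+1), qb α (m+2) k z * (ccf p (m+1) * (k.ascFactorial p : ℂ)) := by
    rw [Finset.mul_sum]
    apply Finset.sum_congr rfl
    intro k hk
    simp only [Finset.mem_Icc] at hk
    obtain ⟨i, rfl⟩ : ∃ i, k = i+1 := ⟨k-1, by omega⟩
    have hi : i ≤ m := by omega
    have e3 : i+1-1 = i := by omega
    have e4 : m+2-(i+1)-1 = m-i := by omega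
    simp only [e3, e4]
    rw [← int_eval p m i hi]
    ring
  rw [hI]
  simp only [hmu0, mu_top p m, mul_one, one_pow]
  ring
theorem Gop_monomial_bound (n p : ℕ) (hn : 2 ≤ n) (α : ℝ) (hα : α ∈ Set.Icc (0:ℝ) 1)
    (r : ℝ) (hr : 1 ≤ r) (z : ℂ) (hz : ‖z‖ ≤ r) :
    ‖Gop α n (fun w => w^p) z‖ ≤ r^p := by
  obtain ⟨m, rfl⟩ : ∃ m, n = m+2 := ⟨n-2, by omega⟩
  obtain ⟨hα0, hα1⟩ := hα
  rw [Gop_eq]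
  have hb1 := Sb_bound p (m+1) r hr z hz
  have hb2 := Sb_bound p (m+2) r hr z hz
  have hccf : ∀ M : ℕ, ‖ccf p M‖ = (M ! : ℝ)/(((M+p)! : ℕ) : ℝ) := by
    intro M
    rw [ccf, norm_div, Complex.norm_natCast, Complex.norm_natCast]
  have hkey : ∀ M : ℕ, (M ! : ℝ)/(((M+p)! : ℕ) : ℝ) * (((M+1).ascFactorial p : ℕ) : ℝ) = 1 := by
    intro M
    rw [div_mul_eq_mul_div, div_eq_one_iff_eq (by exact_mod_cast (M+p).factorial_ne_zero)]
    exact_mod_cast congrArg (Nat.cast (R := ℝ)) (Nat.factorial_mul_ascFactorial M p)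
  have hn1 : ‖(1-(α:ℂ))‖ = 1-α := by
    rw [show (1-(α:ℂ)) = ((1-α : ℝ):ℂ) by push_cast; ring, Complex.norm_real,
      Real.norm_eq_abs, abs_of_nonneg (by linarith)]
  have hn2 : ‖((α:ℝ):ℂ)‖ = α := by
    rw [Complex.norm_real, Real.norm_eq_abs, abs_of_nonneg hα0]
  have hr0 : (0:ℝ) ≤ r := by linarith
  have hrp : (0:ℝ) ≤ r^p := by positivity
  calc ‖(1-(α:ℂ)) * ccf p m * Sb p (m+1) z + (α:ℂ) * ccf p (m+1) * Sb p (m+2) z‖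
      ≤ ‖(1-(α:ℂ)) * ccf p m * Sb p (m+1) z‖ + ‖(α:ℂ) * ccf p (m+1) * Sb p (m+2) z‖ :=
        norm_add_le _ _
    _ = (1-α) * ((m ! : ℝ)/(((m+p)! : ℕ) : ℝ)) * ‖Sb p (m+1) z‖
        + α * (((m+1)! : ℝ)/(((m+1+p)! : ℕ) : ℝ)) * ‖Sb p (m+2) z‖ := by
        rw [norm_mul, norm_mul, norm_mul, norm_mul, hn1, hn2, hccf m, hccf (m+1)]
    _ ≤ (1-α) * ((m ! : ℝ)/(((m+p)! : ℕ) : ℝ)) * (r^p * (((m+1).ascFactorial p : ℕ) : ℝ))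
        + α * (((m+1)! : ℝ)/(((m+1+p)! : ℕ) : ℝ)) * (r^p * (((m+2).ascFactorial p : ℕ) : ℝ)) := by
        gcongr <;>
          first
            | exact mul_nonneg (by linarith) (by positivity)
            | exact hb1
            | exact hb2
            | positivity
            | linarith
    _ = r^p * ((1-α) * ((m ! : ℝ)/(((m+p)! : ℕ) : ℝ) * (((m+1).ascFactorial p : ℕ) : ℝ))
        + α * (((m+1)! : ℝ)/(((m+1+p)! : ℕ) : ℝ) * (((m+2).ascFactorial p : ℕ) : ℝ))) := by
        ring
    _ = r^p := by
        rw [hkey m, hkey (m+1)]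
        ring
end
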